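/- arXiv:2512.15165 — 2 statements merged into one kernel-verified Lean document; each statement's English description precedes it below -/
import Mathlib

section
/- The value function Ψ is asymmetric around the reference point s = 1: for every d with 0 < d ≤ 1, one has Ψ(1+d) < -Ψ(1-d), i.e. the incentive above the reference level is strictly weaker than the disincentive an equal distance below it. -/
/-- Asymmetry of Ψ around the reference point s = 1:
for 0 < d ≤ 1, Ψ(1+d) < -Ψ(1-d). -/
theorem psi_asymmetry
    (β μ : ℝ) (hβ : 0 < β) (hμ0 : 0 < μ) (hμ1 : μ < 1)
    (Ψ : ℝ → ℝ)
    (hΨ : ∀ s, Ψ s = (1/β) * (μ/(1-μ)) * (s - 1) / (((1+μ)/(1-μ)) * s + 1)) :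
    ∀ d : ℝ, 0 < d → d ≤ 1 → Ψ (1 + d) < -Ψ (1 - d) := by
  intro d hd0 hd1
  have h1μ : 0 < 1 - μ := by linarith
  have hA : 0 < (1 + μ) / (1 - μ) := div_pos (by linarith) h1μ
  have hC : 0 < (1/β) * (μ/(1-μ)) :=
    mul_pos (one_div_pos.mpr hβ) (div_pos hμ0 h1μ)
  rw [hΨ, hΨ]
  have hnum : (1/β) * (μ/(1-μ)) * ((1 + d) - 1) = (1/β) * (μ/(1-μ)) * d := by ring
  have hnum2 : -((1/β) * (μ/(1-μ)) * ((1 - d) - 1) / (((1+μ)/(1-μ)) * (1 - d) + 1))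
      = (1/β) * (μ/(1-μ)) * d / (((1+μ)/(1-μ)) * (1 - d) + 1) := by
    ring
  rw [hnum, hnum2]
  apply div_lt_div_of_pos_left (mul_pos hC hd0)
  · have : 0 ≤ (1+μ)/(1-μ) * (1 - d) := mul_nonneg hA.le (by linarith)
    linarith
  · have : (1+μ)/(1-μ) * (1 - d) < (1+μ)/(1-μ) * (1 + d) := by
      apply mul_lt_mul_of_pos_left (by linarith) hA
    linarith
end

section
/- If c > 0, β > 0, 0 < μ < 1, θ > 0, 0 < δ ≤ 2, κ ≥ 0, and η ≥ (βθ(4-δ²)(1+μ) - 1)/(1+μ), then the updated number of contacts c' = c - β(Ψ(c/c̄) + Φ(v) - κ)c + ηc remains nonnegative, where Ψ and Φ satisfy the bounds Ψ(c/c̄) ≤ (1/β)·μ/(1+μ) and Φ(v) ≤ θ(4-δ²). -/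
/-- Nonnegativity of the updated contact number under the lower bound on the noise. -/
theorem contact_update_nonneg
    (c β μ θ δ κ η ΨA ΦB : ℝ)
    (hc : 0 < c) (hβ : 0 < β) (hμ0 : 0 < μ) (hμ1 : μ < 1)
    (hθ : 0 < θ) (hδ0 : 0 < δ) (hδ2 : δ ≤ 2)
    (hκ : 0 ≤ κ)
    (hΨ : ΨA ≤ (1/β) * (μ/(1+μ)))
    (hΦ : ΦB ≤ θ * (4 - δ^2))
    (hη : η ≥ (β*θ*(4 - δ^2)*(1+μ) - 1)/(1+μ)) :
    0 ≤ c - β * (ΨA + ΦB - κ) * c + η * c := by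
  have hμ : (0:ℝ) < 1 + μ := by linarith
  have h1 : β * ΨA ≤ μ / (1+μ) := by
    have := mul_le_mul_of_nonneg_left hΨ hβ.le
    calc β * ΨA ≤ β * ((1/β) * (μ/(1+μ))) := this
      _ = μ / (1+μ) := by field_simp
  have h2 : β * ΦB ≤ β * (θ * (4 - δ^2)) :=
    mul_le_mul_of_nonneg_left hΦ hβ.le
  have h3 : η ≥ β*θ*(4 - δ^2) - 1/(1+μ) := by
    have : (β*θ*(4 - δ^2)*(1+μ) - 1)/(1+μ) = β*θ*(4 - δ^2) - 1/(1+μ) := by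
      field_simp
    linarith [hη, this.symm ▸ hη]
  have hfac : 0 ≤ 1 - β * (ΨA + ΦB - κ) + η := by
    have : μ/(1+μ) + 1/(1+μ) = 1 := by field_simp; ring
    nlinarith [mul_nonneg hβ.le hκ]
  nlinarith [mul_nonneg hfac hc.le]
end
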